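/- If H : Δ → ℝ satisfies generalized Shannon additivity with parameter α > 0, α ≠ 1, α ≠ 2, then H(p₁,p₂) = H(1/2,1/2)·(1 − p₁^α − p₂^α)/(1 − 2^{1−α}) for all (p₁,p₂) ∈ Δ₂. -/

import Mathlib

open Real

/-- A finite stochastic vector: nonnegative entries summing to 1. -/
def IsStochastic (l : List ℝ) : Prop :=
  (∀ x ∈ l, 0 ≤ x) ∧ l.sum = 1

/-- Generalized Shannon additivity with parameter `α`: merging two adjacent
components of a stochastic vector. Powers are real powers (`rpow`). -/
def GSA (α : ℝ) (H : List ℝ → ℝ) : Prop :=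
  ∀ (l₁ l₂ : List ℝ) (a b : ℝ), IsStochastic (l₁ ++ a :: b :: l₂) → 0 < a + b →
    H (l₁ ++ a :: b :: l₂) =
      H (l₁ ++ (a + b) :: l₂) + (a + b) ^ α * H [a / (a + b), b / (a + b)]

noncomputable def fv (H : List ℝ → ℝ) (x : ℝ) : ℝ := H [x, 1 - x]

noncomputable def Dv (H : List ℝ → ℝ) (x : ℝ) : ℝ := fv H x - fv H (1 - x)

lemma lemE {α : ℝ} {H : List ℝ → ℝ} (hH : GSA α H) {a b : ℝ}
    (ha : 0 ≤ a) (hb : 0 ≤ b) (hab1 : a + b ≤ 1) (hab : 0 < a + b) (ha1 : a < 1) :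
    fv H (a+b) + (a+b)^α * fv H (a/(a+b)) = fv H a + (1-a)^α * fv H (b/(1-a)) := by
  have hane : a + b ≠ 0 := ne_of_gt hab
  have h1ane : (1:ℝ) - a ≠ 0 := by intro h; nlinarith
  have hs1 : IsStochastic ([] ++ a :: b :: [1 - a - b]) := by
    constructor
    · intro z hz
      simp only [List.nil_append, List.mem_cons, List.not_mem_nil, or_false] at hz
      rcases hz with rfl | rfl | rfl <;> linarith
    · simp
  have hs2 : IsStochastic ([a] ++ b :: (1 - a - b) :: []) := by
    constructor
    · intro z hz
      simp only [List.cons_append, List.nil_append, List.mem_cons, List.not_mem_nil,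
        or_false] at hz
      rcases hz with rfl | rfl | rfl <;> linarith
    · simp
  have h1 := hH [] [1 - a - b] a b hs1 hab
  have h2 := hH [a] [] b (1 - a - b) hs2 (by rw [show b + (1-a-b) = 1-a by ring]; linarith)
  simp only [List.nil_append, List.cons_append, List.append_nil] at h1 h2
  rw [show (1:ℝ) - a - b = 1 - (a+b) by ring] at h1 h2
  rw [show b + (1 - (a+b)) = 1 - a by ring] at h2
  rw [show b/(a+b) = 1 - a/(a+b) by field_simp; ring] at h1
  rw [show (1 - (a+b))/(1-a) = 1 - b/(1-a) by field_simp; ring] at h2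
  simp only [fv]
  rw [← h1, h2]

lemma lemf0 {α : ℝ} {H : List ℝ → ℝ} (hα : 0 < α) (hH : GSA α H) :
    H [(0:ℝ), 1] = 0 := by
  have h := lemE hH (a := 0) (b := (1:ℝ)/2) (by norm_num) (by norm_num) (by norm_num)
    (by norm_num) (by norm_num)
  norm_num [fv] at h
  have hlt : ((1:ℝ)/2)^α < 1 := Real.rpow_lt_one (by norm_num) (by norm_num) hα
  have h' : H [(0:ℝ), 1] * (((1:ℝ)/2)^α - 1) = 0 := by linarith [h]
  rcases mul_eq_zero.mp h' with h'' | h''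
  · exact h''
  · exfalso; linarith

lemma lemf1 {α : ℝ} {H : List ℝ → ℝ} (hα : 0 < α) (hH : GSA α H) :
    H [(1:ℝ), 0] = 0 := by
  have h := lemE hH (a := (1:ℝ)/2) (b := (1:ℝ)/2) (by norm_num) (by norm_num) (by norm_num)
    (by norm_num) (by norm_num)
  norm_num [fv] at h
  have hlt : ((1:ℝ)/2)^α < 1 := Real.rpow_lt_one (by norm_num) (by norm_num) hα
  have h' : H [(1:ℝ), 0] * (((1:ℝ)/2)^α - 1) = 0 := by linarith [h]
  rcases mul_eq_zero.mp h' with h'' | h''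
  · exact h''
  · exfalso; linarith

lemma lemI {α : ℝ} {H : List ℝ → ℝ} (hH : GSA α H) {y : ℝ}
    (hy0 : 0 ≤ y) (hy : y ≤ 1/2) :
    Dv H y = (1-y)^α * Dv H (y/(1-y)) := by
  have hne : (1:ℝ) - y ≠ 0 := by intro h; linarith [h]
  have h := lemE hH (a := y) (b := 1 - 2*y) hy0 (by linarith) (by linarith)
    (by rw [show y + (1-2*y) = 1-y by ring]; linarith) (by linarith)
  rw [show y + (1-2*y) = 1-y by ring] at h
  rw [show (1-2*y)/(1-y) = 1 - y/(1-y) by field_simp; ring] at h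
  simp only [Dv]
  linear_combination -h

lemma lemIII {α : ℝ} {H : List ℝ → ℝ} (hH : GSA α H) {y : ℝ}
    (hy0 : 0 < y) (hy : y ≤ 1/2) :
    Dv H (2*y) = 2 * Dv H y := by
  have hne : (1:ℝ) - y ≠ 0 := by intro h; linarith [h]
  have hyne : y ≠ 0 := ne_of_gt hy0
  have h1 := lemE hH (a := y) (b := y) hy0.le hy0.le (by linarith) (by linarith) (by linarith)
  rw [show y + y = 2*y by ring] at h1
  rw [show y/(2*y) = 1/2 by field_simp] at h1
  have h2 := lemE hH (a := 1 - 2*y) (b := y) (by linarith) hy0.le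
    (by rw [show 1-2*y+y = 1-y by ring]; linarith)
    (by rw [show 1-2*y+y = 1-y by ring]; linarith) (by linarith)
  rw [show 1 - 2*y + y = 1-y by ring] at h2
  rw [show (1-2*y)/(1-y) = 1 - y/(1-y) by field_simp; ring] at h2
  rw [show (1:ℝ) - (1-2*y) = 2*y by ring] at h2
  rw [show y/(2*y) = 1/2 by field_simp] at h2
  have hI := lemI hH hy0.le hy
  simp only [Dv] at hI ⊢
  linear_combination h1 + h2 - hI

lemma lemD2 {α : ℝ} {H : List ℝ → ℝ} (hH : GSA α H) {x : ℝ}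
    (hx0 : 0 < x) (hx1 : x < 1) :
    Dv H (x^2) = (1 + x^α - (1-x)^α) * Dv H x := by
  have hxne : x ≠ 0 := ne_of_gt hx0
  have h1x : (0:ℝ) < 1 - x := by linarith
  have h1xne : (1:ℝ) - x ≠ 0 := ne_of_gt h1x
  have h1px : (0:ℝ) < 1 + x := by linarith
  have h1pxne : (1:ℝ) + x ≠ 0 := ne_of_gt h1px
  have hx2 : (0:ℝ) < 1 - x^2 := by nlinarith
  have hx2ne : (1:ℝ) - x^2 ≠ 0 := ne_of_gt hx2
  have hE1 := lemE hH (a := x^2) (b := x*(1-x)) (by positivity) (by positivity)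
    (by nlinarith) (by nlinarith) (by nlinarith)
  rw [show x^2 + x*(1-x) = x by ring] at hE1
  rw [show x^2/x = x by field_simp] at hE1
  rw [show x*(1-x)/(1-x^2) = x/(1+x) by rw [div_eq_div_iff hx2ne h1pxne]; ring] at hE1
  have hE2 := lemE hH (a := 1-x) (b := x*(1-x)) (by linarith) (by positivity)
    (by nlinarith) (by nlinarith) (by linarith)
  rw [show 1 - x + x*(1-x) = 1 - x^2 by ring] at hE2
  have hr2 : (1-x)/(1-x^2) = 1 - x/(1+x) := by
    rw [div_eq_iff hx2ne]; field_simp; ring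
  rw [hr2] at hE2
  rw [show (1:ℝ) - (1-x) = x by ring] at hE2
  rw [show x*(1-x)/x = 1-x by field_simp] at hE2
  have hAux := lemI hH (y := x/(1+x)) (by positivity)
    (by rw [div_le_iff₀ h1px]; linarith)
  have hq : (x/(1+x))/(1 - x/(1+x)) = x := by
    rw [show (1:ℝ) - x/(1+x) = 1/(1+x) by field_simp; ring]
    rw [div_div_eq_mul_div]
    field_simp
  rw [hq] at hAux
  have hco : (1-x^2)^α * (1 - x/(1+x))^α = (1-x)^α := by
    rw [← Real.mul_rpow hx2.le (by rw [show (1:ℝ) - x/(1+x) = 1/(1+x) by field_simp; ring]; positivity)]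
    congr 1
    field_simp
    ring
  simp only [Dv] at hAux ⊢
  linear_combination -hE1 - hE2 - (1-x^2)^α * hAux - (fv H x - fv H (1-x)) * hco

lemma lemsym {α : ℝ} {H : List ℝ → ℝ} (hα : 0 < α) (hα2 : α ≠ 2) (hH : GSA α H)
    {x : ℝ} (hx0 : 0 < x) (hx1 : x < 1) : H [x, 1-x] = H [1-x, x] := by
  have h22 : (2:ℝ)^(2:ℝ) = 4 := by
    rw [show (2:ℝ) = ((2:ℕ):ℝ) by norm_num, Real.rpow_natCast]; norm_num
  have ht2 : (2:ℝ)^α - 4 ≠ 0 := by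
    intro h
    have h4 : (2:ℝ)^α = 4 := by linarith
    rcases lt_trichotomy α 2 with hlt | he | hgt
    · have := Real.rpow_lt_rpow_of_exponent_lt (by norm_num : (1:ℝ) < 2) hlt
      rw [h4, h22] at this; linarith
    · exact hα2 he
    · have := Real.rpow_lt_rpow_of_exponent_lt (by norm_num : (1:ℝ) < 2) hgt
      rw [h4, h22] at this; linarith
  suffices hmain : ∀ z : ℝ, 0 < z → z < 1/2 → Dv H z = 0 by
    have key : Dv H x = 0 := by
      rcases lt_trichotomy x (1/2) with h | h | h
      · exact hmain x hx0 h
      · simp only [Dv, h]; norm_num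
      · have h0 := hmain (1-x) (by linarith) (by linarith)
        simp only [Dv] at h0 ⊢
        rw [show (1:ℝ)-(1-x) = x by ring] at h0
        linarith
    simp only [Dv, fv] at key
    rw [show (1:ℝ)-(1-x) = x by ring] at key
    linarith
  intro x hx0 hx12
  have hxne : x ≠ 0 := ne_of_gt hx0
  have hx1 : x < 1 := by linarith
  have h1x : (0:ℝ) < 1 - x := by linarith
  have h1xne : (1:ℝ) - x ≠ 0 := ne_of_gt h1x
  have h2x : (0:ℝ) < 2 - x := by linarith
  have h2xne : (2:ℝ) - x ≠ 0 := ne_of_gt h2x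
  have h1px : (0:ℝ) < 1 + x := by linarith
  have h1pxne : (1:ℝ) + x ≠ 0 := ne_of_gt h1px
  have hx2 : (0:ℝ) < 1 - x^2 := by nlinarith
  have hx2ne : (1:ℝ) - x^2 ≠ 0 := ne_of_gt hx2
  have hq2 : (0:ℝ) < 1 - (1-x)^2 := by nlinarith
  have hq2ne : (1:ℝ) - (1-x)^2 ≠ 0 := ne_of_gt hq2
  have h22x : (0:ℝ) < 2 - 2*x := by linarith
  have h22xne : (2:ℝ) - 2*x ≠ 0 := ne_of_gt h22x
  -- K1, K2
  have K1 := lemE hH (a := x^2) (b := 2*x*(1-x)) (by positivity) (by positivity)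
    (by nlinarith) (by nlinarith) (by nlinarith)
  rw [show x^2 + 2*x*(1-x) = 1 - (1-x)^2 by ring] at K1
  rw [show x^2/(1-(1-x)^2) = x/(2-x) by rw [div_eq_div_iff hq2ne h2xne]; ring] at K1
  rw [show 2*x*(1-x)/(1-x^2) = 2*x/(1+x) by rw [div_eq_div_iff hx2ne h1pxne]; ring] at K1
  have K2 := lemE hH (a := (1-x)^2) (b := 2*x*(1-x)) (by positivity) (by positivity)
    (by nlinarith) (by nlinarith) (by nlinarith)
  rw [show (1-x)^2 + 2*x*(1-x) = 1 - x^2 by ring] at K2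
  have rf : (1-x)^2/(1-x^2) = 1 - 2*x/(1+x) := by
    rw [div_eq_iff hx2ne]; field_simp; ring
  rw [rf] at K2
  have rg : 2*x*(1-x)/(1-(1-x)^2) = 1 - x/(2-x) := by
    rw [div_eq_iff hq2ne]; field_simp; ring
  rw [rg] at K2
  have hKEY : Dv H ((1-x)^2) + Dv H (x^2) =
      (1-(1-x)^2)^α * Dv H (x/(2-x)) - (1-x^2)^α * Dv H (2*x/(1+x)) := by
    simp only [Dv]
    linear_combination -(K1 + K2)
  -- symmetric-square relations
  have hA := lemD2 hH hx0 hx1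
  have hneg : Dv H (1-x) = - Dv H x := by
    simp only [Dv]; rw [show (1:ℝ)-(1-x) = x by ring]; ring
  have hB0 := lemD2 hH (x := 1-x) h1x (by linarith)
  rw [show (1:ℝ)-(1-x) = x by ring] at hB0
  have hB : Dv H ((1-x)^2) = -((1 + (1-x)^α - x^α) * Dv H x) := by
    rw [hB0, hneg]; ring
  -- chain for x/(2-x)
  have hq1 := lemI hH (y := x/(2-x)) (by positivity) (by rw [div_le_iff₀ h2x]; linarith)
  have hqq : (x/(2-x))/(1 - x/(2-x)) = x/(2-2*x) := by
    rw [show (1:ℝ) - x/(2-x) = (2-2*x)/(2-x) by field_simp; ring]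
    rw [div_div_div_eq, div_eq_div_iff (mul_ne_zero h2xne h22xne) h22xne]
    ring
  rw [hqq] at hq1
  have hq2' := lemIII hH (y := x/(2-2*x)) (by positivity) (by rw [div_le_iff₀ h22x]; linarith)
  rw [show 2*(x/(2-2*x)) = x/(1-x) by rw [mul_div_assoc', div_eq_div_iff h22xne h1xne]; ring] at hq2'
  have hq3 := lemI hH (y := x) hx0.le (le_of_lt hx12)
  have hB1 : (0:ℝ) < 1 - x/(2-x) := by
    rw [sub_pos, div_lt_one h2x]; linarith
  have hco1 : (1-(1-x)^2)^α * (1 - x/(2-x))^α = (2*x)^α * (1-x)^α := by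
    rw [← Real.mul_rpow hq2.le hB1.le, ← Real.mul_rpow (by positivity) h1x.le]
    congr 1
    field_simp
    ring
  have e1 : (1-(1-x)^2)^α * Dv H (x/(2-x)) * 2 = (2*x)^α * Dv H x := by
    calc (1-(1-x)^2)^α * Dv H (x/(2-x)) * 2
        = ((1-(1-x)^2)^α * (1 - x/(2-x))^α) * (2 * Dv H (x/(2-2*x))) := by rw [hq1]; ring
      _ = ((2*x)^α * (1-x)^α) * Dv H (x/(1-x)) := by rw [hco1, ← hq2']
      _ = (2*x)^α * ((1-x)^α * Dv H (x/(1-x))) := by ring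
      _ = (2*x)^α * Dv H x := by rw [← hq3]
  -- chain for 2x/(1+x)
  have hr1 := lemIII hH (y := x/(1+x)) (by positivity) (by rw [div_le_iff₀ h1px]; linarith)
  rw [show 2*(x/(1+x)) = 2*x/(1+x) by ring] at hr1
  have hr2 := lemI hH (y := x/(1+x)) (by positivity) (by rw [div_le_iff₀ h1px]; linarith)
  have hqq2 : (x/(1+x))/(1 - x/(1+x)) = x := by
    rw [show (1:ℝ) - x/(1+x) = 1/(1+x) by field_simp; ring]
    rw [div_div_eq_mul_div]
    field_simp
  rw [hqq2] at hr2
  have hB2 : (0:ℝ) < 1 - x/(1+x) := by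
    rw [sub_pos, div_lt_one h1px]; linarith
  have hco2 : (1-x^2)^α * (1 - x/(1+x))^α = (1-x)^α := by
    rw [← Real.mul_rpow hx2.le hB2.le]
    congr 1
    field_simp
    ring
  have e2 : (1-x^2)^α * Dv H (2*x/(1+x)) = 2 * (1-x)^α * Dv H x := by
    calc (1-x^2)^α * Dv H (2*x/(1+x))
        = ((1-x^2)^α * (1 - x/(1+x))^α) * (2 * Dv H x) := by rw [hr1, hr2]; ring
      _ = 2 * (1-x)^α * Dv H x := by rw [hco2]; ring
  -- final
  have h2xα : ((2:ℝ)*x)^α = 2^α * x^α := Real.mul_rpow (by norm_num) hx0.le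
  rw [h2xα] at e1
  have hzero : ((2:ℝ)^α - 4) * (x^α * Dv H x) = 0 := by
    linear_combination -2*hKEY + 2*hA + 2*hB - e1 + 2*e2
  rcases mul_eq_zero.mp hzero with h | h
  · exact absurd h ht2
  · rcases mul_eq_zero.mp h with h' | h'
    · exact absurd h' (ne_of_gt (Real.rpow_pos_of_pos hx0 α))
    · exact h'

theorem stmt_6 (α : ℝ) (hα : 0 < α) (hα1 : α ≠ 1) (hα2 : α ≠ 2)
    (H : List ℝ → ℝ) (hH : GSA α H)
    (p₁ p₂ : ℝ) (h₁ : 0 ≤ p₁) (h₂ : 0 ≤ p₂) (hsum : p₁ + p₂ = 1) :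
    H [p₁, p₂] = H [1/2, 1/2] * (1 - p₁ ^ α - p₂ ^ α) / (1 - (2 : ℝ) ^ (1 - α)) := by
  have hp2 : p₂ = 1 - p₁ := by linarith
  subst hp2
  have hden : (1:ℝ) - 2^(1-α) ≠ 0 := by
    intro h
    have h1 : (2:ℝ)^(1-α) = 1 := by linarith
    rcases lt_trichotomy α 1 with hlt | he | hgt
    · have := Real.one_lt_rpow_iff_of_pos (show (0:ℝ) < 2 by norm_num) (y := 1-α)
      have h2 : (1:ℝ) < 2^(1-α) := this.mpr (by norm_num; linarith)
      linarith
    · exact hα1 he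
    · have h2 : (2:ℝ)^(1-α) < 1 :=
        Real.rpow_lt_one_of_one_lt_of_neg (by norm_num) (by linarith)
      linarith
  have hhalf : (2:ℝ)^(1-α) = 2 * ((1:ℝ)/2)^α := by
    rw [show (1:ℝ)-α = 1 + (-α) by ring, Real.rpow_add (by norm_num), Real.rpow_one,
      Real.rpow_neg (by norm_num), show ((1:ℝ)/2) = (2:ℝ)⁻¹ by norm_num,
      Real.inv_rpow (by norm_num)]
  rcases eq_or_lt_of_le h₁ with h0 | h0
  · -- p₁ = 0
    rw [← h0]
    norm_num
    rw [Real.zero_rpow (ne_of_gt hα), mul_zero, neg_zero, zero_div]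
    exact lemf0 hα hH
  rcases eq_or_lt_of_le h₂ with h1' | h1'
  · -- p₁ = 1
    have : p₁ = 1 := by linarith
    subst this
    norm_num
    rw [Real.zero_rpow (ne_of_gt hα), mul_zero, neg_zero, zero_div]
    exact lemf1 hα hH
  have hx1 : p₁ < 1 := by linarith
  set x := p₁ with hxdef
  have hxne : x ≠ 0 := ne_of_gt h0
  have h1x : (0:ℝ) < 1 - x := by linarith
  have h1xne : (1:ℝ) - x ≠ 0 := ne_of_gt h1x
  have hsym := lemsym hα hα2 hH h0 hx1
  -- 4-vector computation
  have hv1 : IsStochastic ([] ++ (x/2) :: (x/2) :: [(1-x)/2, (1-x)/2]) := by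
    constructor
    · intro z hz
      simp only [List.nil_append, List.mem_cons, List.not_mem_nil, or_false] at hz
      rcases hz with rfl | rfl | rfl | rfl <;> linarith
    · simp only [List.nil_append, List.sum_cons, List.sum_nil]; ring
  have h1 := hH [] [(1-x)/2, (1-x)/2] (x/2) (x/2) hv1 (by linarith)
  simp only [List.nil_append] at h1
  rw [show x/2+x/2 = x by ring, show (x/2)/x = 1/2 by field_simp] at h1
  have hv2 : IsStochastic ([x] ++ ((1-x)/2) :: ((1-x)/2) :: []) := by
    constructor
    · intro z hz
      simp only [List.cons_append, List.nil_append, List.mem_cons, List.not_mem_nil,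
        or_false] at hz
      rcases hz with rfl | rfl | rfl <;> linarith
    · simp only [List.cons_append, List.nil_append, List.sum_cons, List.sum_nil]; ring
  have h2 := hH [x] [] ((1-x)/2) ((1-x)/2) hv2 (by linarith)
  simp only [List.cons_append, List.nil_append, List.append_nil] at h2
  rw [show (1-x)/2+(1-x)/2 = 1-x by ring,
    show ((1-x)/2)/(1-x) = 1/2 by field_simp] at h2
  have h3 := hH [x/2] [(1-x)/2] (x/2) ((1-x)/2) hv1 (by linarith [show x/2 + (1-x)/2 = 1/2 by ring])
  simp only [List.cons_append, List.nil_append] at h3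
  rw [show x/2 + (1-x)/2 = (1:ℝ)/2 by ring, show (x/2)/((1:ℝ)/2) = x by ring,
    show ((1-x)/2)/((1:ℝ)/2) = 1-x by ring] at h3
  have hv3 : IsStochastic ([x/2] ++ ((1-x)/2) :: (x/2) :: [(1-x)/2]) := by
    constructor
    · intro z hz
      simp only [List.cons_append, List.nil_append, List.mem_cons, List.not_mem_nil,
        or_false] at hz
      rcases hz with rfl | rfl | rfl | rfl <;> linarith
    · simp only [List.cons_append, List.nil_append, List.sum_cons, List.sum_nil]; ring
  have h4 := hH [x/2] [(1-x)/2] ((1-x)/2) (x/2) hv3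
    (by linarith [show (1-x)/2 + x/2 = 1/2 by ring])
  simp only [List.cons_append, List.nil_append] at h4
  rw [show (1-x)/2 + x/2 = (1:ℝ)/2 by ring, show (x/2)/((1:ℝ)/2) = x by ring,
    show ((1-x)/2)/((1:ℝ)/2) = 1-x by ring] at h4
  rw [← hsym] at h4
  have h5 := hH [] [x/2, (1-x)/2] (x/2) ((1-x)/2) hv3
    (by linarith [show x/2 + (1-x)/2 = 1/2 by ring])
  simp only [List.cons_append, List.nil_append] at h5
  rw [show x/2 + (1-x)/2 = (1:ℝ)/2 by ring, show (x/2)/((1:ℝ)/2) = x by ring,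
    show ((1-x)/2)/((1:ℝ)/2) = 1-x by ring] at h5
  have hv4 : IsStochastic ([(1:ℝ)/2] ++ (x/2) :: ((1-x)/2) :: []) := by
    constructor
    · intro z hz
      simp only [List.cons_append, List.nil_append, List.mem_cons, List.not_mem_nil,
        or_false] at hz
      rcases hz with rfl | rfl | rfl <;> linarith
    · simp only [List.cons_append, List.nil_append, List.sum_cons, List.sum_nil]; ring
  have h6 := hH [(1:ℝ)/2] [] (x/2) ((1-x)/2) hv4
    (by linarith [show x/2 + (1-x)/2 = 1/2 by ring])
  simp only [List.cons_append, List.nil_append, List.append_nil] at h6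
  rw [show x/2 + (1-x)/2 = (1:ℝ)/2 by ring, show (x/2)/((1:ℝ)/2) = x by ring,
    show ((1-x)/2)/((1:ℝ)/2) = 1-x by ring] at h6
  have hF : H [x, 1-x] * (1 - 2*((1:ℝ)/2)^α) = H [1/2, 1/2] * (1 - x^α - (1-x)^α) := by
    linear_combination -h1 - h2 + h3 - h4 + h5 + h6
  rw [eq_div_iff hden, hhalf]
  linear_combination hF
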